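/- Let (Ω, ℱ, P) be a probability space, let Y_n, Y : Ω → ℝ be measurable with Y_n → Y P-almost everywhere, and let f : ℝ → ℝ be continuous and vanishing at infinity (f(z) → 0 as |z| → ∞). Then sup_{x ∈ ℝ} | E[f(Y_n + x)] − E[f(Y + x)] | → 0 as n → ∞. -/

import Mathlib

open Filter Topology MeasureTheory

/-- If `Yₙ → Y` almost everywhere on a probability space and `f : ℝ → ℝ` is continuous
and vanishes at infinity, then `x ↦ E[f(Yₙ + x)]` converges to `x ↦ E[f(Y + x)]`
uniformly on `ℝ` (i.e. in the supremum norm). -/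
theorem semigroup_sup_norm_convergence
    {Ω : Type*} [MeasurableSpace Ω] (P : Measure Ω) [IsProbabilityMeasure P]
    (Y : ℕ → Ω → ℝ) (Y₀ : Ω → ℝ)
    (hY : ∀ n, Measurable (Y n)) (hY₀ : Measurable Y₀)
    (hae : ∀ᵐ ω ∂P, Tendsto (fun n => Y n ω) atTop (𝓝 (Y₀ ω)))
    (f : ℝ → ℝ) (hfc : Continuous f) (hf0 : Tendsto f (cocompact ℝ) (𝓝 0)) :
    TendstoUniformly (fun n x => ∫ ω, f (Y n ω + x) ∂P)
      (fun x => ∫ ω, f (Y₀ ω + x) ∂P) atTop := by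
  -- f is uniformly continuous
  have hu : UniformContinuous f := hfc.uniformContinuous_of_tendsto_cocompact hf0
  -- f is bounded
  obtain ⟨M, hM0, hbd⟩ : ∃ M : ℝ, 0 ≤ M ∧ ∀ z, |f z| ≤ M := by
    obtain ⟨K, hK, hKf⟩ := (hf0.eventually (Metric.ball_mem_nhds (0 : ℝ) one_pos)).exists_mem
    rw [mem_cocompact] at hK
    obtain ⟨t, ht, hts⟩ := hK
    obtain ⟨M, hM⟩ := (ht.image hfc).isBounded.subset_closedBall 0
    refine ⟨max M 1, le_trans zero_le_one (le_max_right _ _), fun z => ?_⟩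
    by_cases hz : z ∈ t
    · have := hM ⟨z, hz, rfl⟩
      simp only [Metric.mem_closedBall, Real.dist_eq, sub_zero] at this
      exact this.trans (le_max_left _ _)
    · have := hKf z (hts (by simpa using hz))
      simp only [Metric.mem_ball, Real.dist_eq, sub_zero] at this
      exact this.le.trans (le_max_right _ _)
  have intgr : ∀ g : Ω → ℝ, Measurable g → Integrable (fun ω => f (g ω)) P := fun g hg =>
    Integrable.mono' (integrable_const M) (hfc.measurable.comp hg).aestronglyMeasurable
      (ae_of_all _ fun ω => hbd _)
  have htm : TendstoInMeasure P Y atTop Y₀ :=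
    tendstoInMeasure_of_tendsto_ae (fun n => (hY n).aestronglyMeasurable) hae
  rw [Metric.tendstoUniformly_iff]
  intro ε hε
  obtain ⟨δ, hδ, hδf⟩ := Metric.uniformContinuous_iff.mp hu (ε / 2) (half_pos hε)
  set c := ε / (2 * (2 * M + 1)) with hc_def
  have hc : 0 < c := div_pos hε (by positivity)
  have h0 : Tendsto (fun n => (P { ω | δ ≤ dist (Y n ω) (Y₀ ω) }).toReal) atTop (𝓝 0) := by
    have := (tendstoInMeasure_iff_dist.mp htm δ hδ)
    simpa [Function.comp_def] using (ENNReal.tendsto_toReal (by simp)).comp this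
  filter_upwards [h0.eventually_lt_const hc] with n hn x
  set A := { ω | δ ≤ dist (Y n ω) (Y₀ ω) } with hA_def
  have hAmeas : MeasurableSet A := measurableSet_le measurable_const ((hY n).dist hY₀)
  have hptw : ∀ ω, |f (Y₀ ω + x) - f (Y n ω + x)| ≤
      A.indicator (fun _ => 2 * M) ω + ε / 2 := by
    intro ω
    by_cases hω : ω ∈ A
    · rw [Set.indicator_of_mem hω]
      have : |f (Y₀ ω + x) - f (Y n ω + x)| ≤ M + M :=
        (abs_sub _ _).trans (add_le_add (hbd _) (hbd _))
      linarith [hε.le]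
    · rw [Set.indicator_of_notMem hω]
      have hd : dist (Y₀ ω + x) (Y n ω + x) < δ := by
        rw [Real.dist_eq]
        have : ¬ δ ≤ dist (Y n ω) (Y₀ ω) := hω
        rw [Real.dist_eq] at this
        rw [abs_sub_comm] at this
        simpa using lt_of_not_ge this
      have := hδf hd
      rw [Real.dist_eq] at this
      linarith
  have hint_ind : Integrable (fun ω => A.indicator (fun _ => (2 * M : ℝ)) ω + ε / 2) P := by
    exact ((integrable_const (2 * M)).indicator hAmeas).add (integrable_const _)
  have hint_abs : Integrable (fun ω => |f (Y₀ ω + x) - f (Y n ω + x)|) P :=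
    ((intgr _ (hY₀.add_const x)).sub (intgr _ ((hY n).add_const x))).abs
  rw [Real.dist_eq]
  calc |(∫ ω, f (Y₀ ω + x) ∂P) - ∫ ω, f (Y n ω + x) ∂P|
      = |∫ ω, (f (Y₀ ω + x) - f (Y n ω + x)) ∂P| := by
        rw [integral_sub (intgr _ (hY₀.add_const x)) (intgr _ ((hY n).add_const x))]
    _ ≤ ∫ ω, |f (Y₀ ω + x) - f (Y n ω + x)| ∂P := by simpa [Real.norm_eq_abs] using norm_integral_le_integral_norm (μ := P) fun ω => f (Y₀ ω + x) - f (Y n ω + x)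
    _ ≤ ∫ ω, (A.indicator (fun _ => (2 * M : ℝ)) ω + ε / 2) ∂P :=
        integral_mono hint_abs hint_ind hptw
    _ = 2 * M * (P A).toReal + ε / 2 := by
        rw [integral_add ((integrable_const (2 * M)).indicator hAmeas) (integrable_const _),
          integral_indicator_const _ hAmeas, integral_const]
        simp [mul_comm, smul_eq_mul, measureReal_def]
    _ < ε := by
        have h1 : 2 * M * (P A).toReal ≤ (2 * M + 1) * (P A).toReal := by
          apply mul_le_mul_of_nonneg_right (by linarith) ENNReal.toReal_nonneg
        have h2 : (2 * M + 1) * (P A).toReal < (2 * M + 1) * c :=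
          mul_lt_mul_of_pos_left hn (by positivity)
        have h3 : (2 * M + 1) * c = ε / 2 := by
          rw [hc_def]; field_simp
        linarith
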